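/- The noncrossing partition lattice NC(S_n, w) for w = (1 2 ... n) is a lattice: every pair of elements has a least upper bound and a greatest lower bound. -/

import Mathlib

open Equiv

noncomputable def wordLen {G : Type*} [Group G] (R : Set G) (g : G) : ℕ :=
  sInf {k | ∃ l : List G, (∀ x ∈ l, x ∈ R) ∧ l.length = k ∧ l.prod = g}

/-- Reflection length with respect to the set of all transpositions. -/
noncomputable def reflLen {n : ℕ} (σ : Perm (Fin n)) : ℕ :=
  wordLen {τ : Perm (Fin n) | τ.IsSwap} σ

/-- Absolute order on the symmetric group. -/
noncomputable def absLe {n : ℕ} (u v : Perm (Fin n)) : Prop :=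
  reflLen u + reflLen (u⁻¹ * v) = reflLen v

namespace NCW

variable {n : ℕ}

def WS (σ : Perm (Fin n)) : Set ℕ :=
  {k | ∃ l : List (Perm (Fin n)), (∀ x ∈ l, x ∈ {τ : Perm (Fin n) | τ.IsSwap}) ∧ l.length = k ∧ l.prod = σ}

lemma reflLen_def (σ : Perm (Fin n)) : reflLen σ = sInf (WS σ) := rfl

lemma ws_nonempty (σ : Perm (Fin n)) : (WS σ).Nonempty := by
  refine Equiv.Perm.swap_induction_on σ ⟨0, [], by simp⟩ ?_
  intro f x y hxy ih
  obtain ⟨k, l, hl, hlen, hprod⟩ := ih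
  exact ⟨k + 1, swap x y :: l, by
    constructor
    · intro t ht
      rcases List.mem_cons.mp ht with h | h
      · exact h ▸ ⟨x, y, hxy, rfl⟩
      · exact hl t h
    · simp [hlen, hprod]⟩

lemma exists_minword (σ : Perm (Fin n)) :
    ∃ l : List (Perm (Fin n)), (∀ x ∈ l, x.IsSwap) ∧ l.length = reflLen σ ∧ l.prod = σ :=
  Nat.sInf_mem (ws_nonempty σ)

lemma reflLen_le_length (σ : Perm (Fin n)) (l : List (Perm (Fin n)))
    (hl : ∀ x ∈ l, x.IsSwap) (hprod : l.prod = σ) : reflLen σ ≤ l.length :=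
  Nat.sInf_le ⟨l, hl, rfl, hprod⟩

lemma reflLen_one : reflLen (1 : Perm (Fin n)) = 0 :=
  Nat.le_zero.mp (reflLen_le_length 1 [] (by simp) (by simp))

lemma reflLen_mul_le (x y : Perm (Fin n)) : reflLen (x * y) ≤ reflLen x + reflLen y := by
  obtain ⟨l1, h1, hl1, hp1⟩ := exists_minword x
  obtain ⟨l2, h2, hl2, hp2⟩ := exists_minword y
  have := reflLen_le_length (x * y) (l1 ++ l2) (by
    intro t ht; rcases List.mem_append.mp ht with h | h
    · exact h1 t h
    · exact h2 t h) (by rw [List.prod_append, hp1, hp2])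
  simpa [hl1, hl2] using this

lemma reflLen_eq_zero_iff (σ : Perm (Fin n)) : reflLen σ = 0 ↔ σ = 1 := by
  constructor
  · intro h
    obtain ⟨l, _, hlen, hprod⟩ := exists_minword σ
    rw [h] at hlen
    rw [List.length_eq_zero_iff] at hlen
    rw [hlen] at hprod
    simpa using hprod.symm
  · intro h; rw [h]; exact reflLen_one

lemma reflLen_swap {a b : Fin n} (hab : a ≠ b) : reflLen (swap a b) = 1 := by
  have h1 : reflLen (swap a b) ≤ 1 := by
    simpa using reflLen_le_length (swap a b) [swap a b] (by simp; exact ⟨a, b, hab, rfl⟩) (by simp)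
  have h2 : reflLen (swap a b) ≠ 0 := by
    rw [Ne, reflLen_eq_zero_iff]
    intro h
    have := congrArg (fun f : Perm (Fin n) => f a) h
    simp at this
    exact hab this.symm
  omega

lemma reflLen_inv_le (x : Perm (Fin n)) : reflLen x⁻¹ ≤ reflLen x := by
  obtain ⟨l, hl, hlen, hprod⟩ := exists_minword x
  have := reflLen_le_length x⁻¹ ((l.map (fun t => t⁻¹)).reverse) (by
    intro t ht
    simp only [List.mem_reverse, List.mem_map] at ht
    obtain ⟨s, hs, rfl⟩ := ht
    obtain ⟨a, b, hab, rfl⟩ := hl s hs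
    rw [swap_inv]; exact ⟨a, b, hab, rfl⟩) (by rw [← List.prod_inv_reverse, hprod])
  simpa [hlen] using this

lemma reflLen_inv (x : Perm (Fin n)) : reflLen x⁻¹ = reflLen x :=
  le_antisymm (reflLen_inv_le x) (by simpa using reflLen_inv_le x⁻¹)

lemma conj_prod (g : Perm (Fin n)) (l : List (Perm (Fin n))) :
    (l.map (fun t => g * t * g⁻¹)).prod = g * l.prod * g⁻¹ := by
  induction l with
  | nil => simp
  | cons t l ih => simp only [List.map_cons, List.prod_cons, ih]; group

lemma reflLen_conj_le (g x : Perm (Fin n)) : reflLen (g * x * g⁻¹) ≤ reflLen x := by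
  obtain ⟨l, hl, hlen, hprod⟩ := exists_minword x
  have := reflLen_le_length (g * x * g⁻¹) (l.map (fun t => g * t * g⁻¹)) (by
    intro t ht
    simp only [List.mem_map] at ht
    obtain ⟨s, hs, rfl⟩ := ht
    obtain ⟨a, b, hab, rfl⟩ := hl s hs
    rw [← Equiv.swap_apply_apply]
    exact ⟨g a, g b, fun h => hab (g.injective h), rfl⟩) (by rw [conj_prod, hprod])
  simpa [hlen] using this

lemma reflLen_conj (g x : Perm (Fin n)) : reflLen (g * x * g⁻¹) = reflLen x := by
  refine le_antisymm (reflLen_conj_le g x) ?_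
  have := reflLen_conj_le g⁻¹ (g * x * g⁻¹)
  simp only [inv_inv] at this
  calc reflLen x = reflLen (g⁻¹ * (g * x * g⁻¹) * g) := by group
    _ ≤ reflLen (g * x * g⁻¹) := by simpa using this

lemma triangle (x y : Perm (Fin n)) : reflLen y ≤ reflLen x + reflLen (x⁻¹ * y) := by
  have := reflLen_mul_le x (x⁻¹ * y)
  simpa using this

lemma absLe_refl (x : Perm (Fin n)) : absLe x x := by
  unfold absLe; simp [reflLen_one]

lemma one_absLe (x : Perm (Fin n)) : absLe 1 x := by
  unfold absLe; simp [reflLen_one]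

lemma absLe_one_iff (x : Perm (Fin n)) : absLe x 1 ↔ x = 1 := by
  unfold absLe
  constructor
  · intro h
    rw [reflLen_one] at h
    exact (reflLen_eq_zero_iff x).mp (by omega)
  · rintro rfl; simp [reflLen_one]

lemma absLe_trans {x y z : Perm (Fin n)} (h1 : absLe x y) (h2 : absLe y z) : absLe x z := by
  unfold absLe at *
  have t1 := triangle x z
  have t2 : reflLen (x⁻¹ * z) ≤ reflLen (x⁻¹ * y) + reflLen (y⁻¹ * z) := by
    have := reflLen_mul_le (x⁻¹ * y) (y⁻¹ * z)
    simpa [mul_assoc] using this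
  omega


/-- Number of orbits (cycles, including fixed points) of a permutation. -/
noncomputable def Nc (σ : Perm (Fin n)) : ℕ := Nat.card (Quotient (Equiv.Perm.SameCycle.setoid σ))

lemma reach {σ : Perm (Fin n)} {J : Fin n → Fin n → Prop} (hJ : Equivalence J)
    (h : ∀ x, J x (σ x)) {x y : Fin n} (hxy : σ.SameCycle x y) : J x y := by
  classical
  obtain ⟨i, -, -, hi⟩ := Equiv.Perm.SameCycle.exists_pow_eq σ hxy
  subst hi
  clear hxy
  induction i with
  | zero => exact hJ.refl x
  | succ k ih =>
    have : (σ ^ (k + 1)) x = σ ((σ ^ k) x) := by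
      rw [pow_succ' σ k]; rfl
    rw [this]
    exact hJ.trans ih (h _)

lemma sameCycle_nat {σ : Perm (Fin n)} {x y : Fin n} (k : ℕ) (h : (σ ^ k) x = y) :
    σ.SameCycle x y := ⟨(k : ℤ), by rw [zpow_natCast]; exact h⟩

lemma Nc_le (σ : Perm (Fin n)) : Nc σ ≤ n := by
  have h : Function.Surjective (Quotient.mk (Equiv.Perm.SameCycle.setoid σ)) :=
    Quotient.exists_rep
  have := Nat.card_le_card_of_surjective _ h
  simpa [Nc] using this

lemma Nc_one : Nc (1 : Perm (Fin n)) = n := by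
  have hb : Function.Bijective (Quotient.mk (Equiv.Perm.SameCycle.setoid (1 : Perm (Fin n)))) := by
    constructor
    · intro x y h
      exact Equiv.Perm.sameCycle_one.mp (Quotient.exact h)
    · exact Quotient.exists_rep
  have := Nat.card_eq_of_bijective _ hb
  simpa [Nc] using this.symm

lemma card_succ_of {A B : Type} [Finite A] (g : A → B) (hs : Function.Surjective g)
    (a₀ b₀ : A) (hne : a₀ ≠ b₀) (heq : g a₀ = g b₀)
    (hfib : ∀ x y, g x = g y → x = y ∨ ((x = a₀ ∨ x = b₀) ∧ (y = a₀ ∨ y = b₀))) :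
    Nat.card A = Nat.card B + 1 := by
  classical
  have e1 : {x : A // x ≠ b₀} ≃ B := by
    refine Equiv.ofBijective (fun x => g x.1) ⟨?_, ?_⟩
    · rintro ⟨x, hx⟩ ⟨y, hy⟩ h
      simp only at h
      rcases hfib x y h with h' | ⟨hx', hy'⟩
      · exact Subtype.ext h'
      · have : x = a₀ := hx'.resolve_right hx
        have : y = a₀ := hy'.resolve_right hy
        subst this; exact Subtype.ext (hx'.resolve_right hx)
    · intro b
      obtain ⟨x, hx⟩ := hs b
      by_cases h : x = b₀
      · refine ⟨⟨a₀, hne⟩, ?_⟩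
        show g a₀ = b
        rw [heq, ← h]; exact hx
      · exact ⟨⟨x, h⟩, hx⟩
  have e2 : A ≃ Option {x : A // x ≠ b₀} := by
    refine ⟨fun x => if h : x = b₀ then none else some ⟨x, h⟩,
      fun o => o.elim b₀ (fun x => x.1), ?_, ?_⟩
    · intro x
      by_cases h : x = b₀ <;> simp [h]
    · rintro (_ | ⟨x, hx⟩)
      · simp
      · simp [hx]
  have : Fintype A := Fintype.ofFinite A
  have : Fintype {x : A // x ≠ b₀} := Fintype.ofFinite _
  calc Nat.card A = Nat.card (Option {x : A // x ≠ b₀}) := Nat.card_congr e2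
    _ = Nat.card {x : A // x ≠ b₀} + 1 := by
        rw [Nat.card_eq_fintype_card, Nat.card_eq_fintype_card]
        exact Fintype.card_option
    _ = Nat.card B + 1 := by rw [Nat.card_congr e1]

def Jrel (σ : Perm (Fin n)) (a b : Fin n) : Fin n → Fin n → Prop := fun x y =>
  σ.SameCycle x y ∨ (σ.SameCycle x a ∧ σ.SameCycle y b) ∨ (σ.SameCycle x b ∧ σ.SameCycle y a)

lemma Jrel_equiv (σ : Perm (Fin n)) (a b : Fin n) : Equivalence (Jrel σ a b) := by
  constructor
  · intro x; exact Or.inl (Equiv.Perm.SameCycle.refl σ x)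
  · rintro x y (h | ⟨h1, h2⟩ | ⟨h1, h2⟩)
    · exact Or.inl h.symm
    · exact Or.inr (Or.inr ⟨h2, h1⟩)
    · exact Or.inr (Or.inl ⟨h2, h1⟩)
  · rintro x y z (h | ⟨h1, h2⟩ | ⟨h1, h2⟩) (h' | ⟨h1', h2'⟩ | ⟨h1', h2'⟩)
    · exact Or.inl (h.trans h')
    · exact Or.inr (Or.inl ⟨h.trans h1', h2'⟩)
    · exact Or.inr (Or.inr ⟨h.trans h1', h2'⟩)
    · exact Or.inr (Or.inl ⟨h1, h'.symm.trans h2⟩)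
    · exact Or.inl (h1.trans (h1'.symm.trans (h2.trans h2'.symm)))
    · exact Or.inl (h1.trans h2'.symm)
    · exact Or.inr (Or.inr ⟨h1, h'.symm.trans h2⟩)
    · exact Or.inl (h1.trans h2'.symm)
    · exact Or.inl (h1.trans (h1'.symm.trans (h2.trans h2'.symm)))

lemma Jrel_collapse {σ : Perm (Fin n)} {a b : Fin n} (h : σ.SameCycle a b) {x y : Fin n}
    (hxy : Jrel σ a b x y) : σ.SameCycle x y := by
  rcases hxy with h' | ⟨h1, h2⟩ | ⟨h1, h2⟩
  · exact h'
  · exact (h1.trans h).trans h2.symm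
  · exact (h1.trans h.symm).trans h2.symm

lemma swap_mul_step (σ : Perm (Fin n)) (a b : Fin n) (x : Fin n) :
    Jrel σ a b x ((swap a b * σ) x) := by
  have hx : (swap a b * σ) x = swap a b (σ x) := rfl
  by_cases h1 : σ x = a
  · rw [hx, h1, swap_apply_left]
    exact Or.inr (Or.inl ⟨⟨1, by simpa using h1⟩, Equiv.Perm.SameCycle.refl σ b⟩)
  · by_cases h2 : σ x = b
    · rw [hx, h2, swap_apply_right]
      exact Or.inr (Or.inr ⟨⟨1, by simpa using h2⟩, Equiv.Perm.SameCycle.refl σ a⟩)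
    · rw [hx, swap_apply_of_ne_of_ne h1 h2]
      exact Or.inl ⟨1, by simp⟩

lemma sc_swap_mul_le {σ : Perm (Fin n)} {a b : Fin n} {x y : Fin n}
    (h : (swap a b * σ).SameCycle x y) : Jrel σ a b x y :=
  reach (Jrel_equiv σ a b) (swap_mul_step σ a b) h

lemma sigma_eq_swap_mul (σ : Perm (Fin n)) (a b : Fin n) :
    σ = swap a b * (swap a b * σ) := by
  rw [← mul_assoc, swap_mul_self, one_mul]


lemma sc_or (σ : Perm (Fin n)) (a b : Fin n) (hab : a ≠ b) :
    σ.SameCycle a b ∨ (swap a b * σ).SameCycle a b := by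
  classical
  set σ' := swap a b * σ with hσ'
  have hex : ∃ k, 0 < k ∧ ((σ' ^ k) a = a ∨ (σ' ^ k) a = b) :=
    ⟨orderOf σ', orderOf_pos σ', by rw [pow_orderOf_eq_one]; left; rfl⟩
  set k := Nat.find hex with hk
  obtain ⟨hk0, hkor⟩ := Nat.find_spec hex
  have hmin : ∀ i, 0 < i → i < k → ¬((σ' ^ i) a = a ∨ (σ' ^ i) a = b) := by
    intro i hi0 hik hcon
    exact Nat.find_min hex hik ⟨hi0, hcon⟩
  have claim : ∀ j, (∀ i, 0 < i → i ≤ j → ¬((σ' ^ i) a = a ∨ (σ' ^ i) a = b)) →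
      (σ' ^ j) a = (σ ^ j) a := by
    intro j
    induction j with
    | zero => intro _; rfl
    | succ j ih =>
      intro h
      have hj := ih (fun i h1 h2 => h i h1 (h2.trans (Nat.le_succ j)))
      have hstep : (σ' ^ (j + 1)) a = swap a b ((σ ^ (j + 1)) a) := by
        rw [pow_succ' σ' j, pow_succ' σ j]
        show σ' ((σ' ^ j) a) = swap a b (σ ((σ ^ j) a))
        rw [hj]; rfl
      have hnot := h (j + 1) (Nat.succ_pos j) le_rfl
      rw [hstep] at hnot ⊢
      set X := (σ ^ (j + 1)) a with hX
      have hXa : X ≠ a := by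
        intro h'; rw [h', swap_apply_left] at hnot; exact hnot (Or.inr rfl)
      have hXb : X ≠ b := by
        intro h'; rw [h', swap_apply_right] at hnot; exact hnot (Or.inl rfl)
      rw [swap_apply_of_ne_of_ne hXa hXb]
  have hpred : (σ' ^ (k - 1)) a = (σ ^ (k - 1)) a :=
    claim (k - 1) (fun i h1 h2 => hmin i h1 (by omega))
  have hfin : (σ' ^ k) a = swap a b ((σ ^ k) a) := by
    have hk1 : k = (k - 1) + 1 := by omega
    rw [hk1, pow_succ' σ' _, pow_succ' σ _]
    show σ' ((σ' ^ (k-1)) a) = swap a b (σ ((σ ^ (k-1)) a))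
    rw [hpred]; rfl
  rcases hkor with h | h
  · left
    have : swap a b ((σ ^ k) a) = swap a b b := by
      rw [← hfin, h, swap_apply_right]
    exact sameCycle_nat k ((swap a b).injective this)
  · right
    exact sameCycle_nat k h

lemma sc_not_both (σ : Perm (Fin n)) (a b : Fin n) (hab : a ≠ b) :
    ¬(σ.SameCycle a b ∧ (swap a b * σ).SameCycle a b) := by
  classical
  rintro ⟨h1, h2⟩
  set σ' := swap a b * σ with hσ'
  obtain ⟨e, he0, -, he⟩ := Equiv.Perm.SameCycle.exists_pow_eq σ h1
  have hex : ∃ j, 0 < j ∧ ((σ ^ j) a = a ∨ (σ ^ j) a = b) := ⟨e, he0, Or.inr he⟩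
  set d := Nat.find hex with hd
  obtain ⟨hd0, hdor⟩ := Nat.find_spec hex
  have hmin : ∀ i, 0 < i → i < d → ¬((σ ^ i) a = a ∨ (σ ^ i) a = b) := by
    intro i hi0 hik hcon
    exact Nat.find_min hex hik ⟨hi0, hcon⟩
  have hdb : (σ ^ d) a = b := by
    rcases hdor with h | h
    · exfalso
      have hper : ∀ q r : ℕ, (σ ^ (q * d + r)) a = (σ ^ r) a := by
        intro q
        induction q with
        | zero => intro r; simp
        | succ q ih =>
          intro r
          have : (q + 1) * d + r = (q * d + r) + d := by ring
          rw [this, pow_add]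
          show (σ ^ (q*d+r)) ((σ ^ d) a) = (σ ^ r) a
          rw [h]; exact ih r
      have hmod : (σ ^ (e % d)) a = b := by
        have : d * (e / d) + e % d = e := Nat.div_add_mod e d
        calc (σ ^ (e % d)) a = (σ ^ ((e/d) * d + e % d)) a := (hper (e/d) (e % d)).symm
          _ = (σ ^ e) a := by rw [Nat.mul_comm, this]
          _ = b := he
      have h0 : 0 < e % d := by
        rcases Nat.eq_zero_or_pos (e % d) with h' | h'
        · rw [h'] at hmod; simp at hmod; exact absurd hmod hab
        · exact h'
      exact hmin (e % d) h0 (Nat.mod_lt _ hd0) (Or.inr hmod)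
    · exact h
  have hS : ∀ m : ℕ, ∃ j, j < d ∧ (σ' ^ m) a = (σ ^ j) a := by
    intro m
    induction m with
    | zero => exact ⟨0, hd0, rfl⟩
    | succ m ih =>
      obtain ⟨j, hj, hm⟩ := ih
      have hstep : (σ' ^ (m + 1)) a = swap a b ((σ ^ (j + 1)) a) := by
        rw [pow_succ' σ' m, pow_succ' σ j]
        show σ' ((σ' ^ m) a) = swap a b (σ ((σ ^ j) a))
        rw [hm]; rfl
      by_cases hj1 : j + 1 = d
      · refine ⟨0, hd0, ?_⟩
        rw [hstep, hj1, hdb, swap_apply_right]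
        rfl
      · have hlt : j + 1 < d := by omega
        have hne := hmin (j + 1) (Nat.succ_pos j) hlt
        have hXa : (σ ^ (j+1)) a ≠ a := fun h' => hne (Or.inl h')
        have hXb : (σ ^ (j+1)) a ≠ b := fun h' => hne (Or.inr h')
        exact ⟨j + 1, hlt, by rw [hstep, swap_apply_of_ne_of_ne hXa hXb]⟩
  obtain ⟨m, -, -, hm⟩ := Equiv.Perm.SameCycle.exists_pow_eq σ' h2
  obtain ⟨j, hj, hjm⟩ := hS m
  have hbj : (σ ^ j) a = b := by rw [← hjm, hm]
  rcases Nat.eq_zero_or_pos j with h' | h'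
  · rw [h'] at hbj; simp at hbj; exact hab hbj
  · exact hmin j h' hj (Or.inr hbj)

lemma Nc_split {σ : Perm (Fin n)} {a b : Fin n} (hab : a ≠ b) (h : σ.SameCycle a b) :
    Nc (swap a b * σ) = Nc σ + 1 := by
  set σ' := swap a b * σ with hσ'
  have hno : ¬ σ'.SameCycle a b := fun hc => sc_not_both σ a b hab ⟨h, hc⟩
  have hle : ∀ x y : Fin n, σ'.SameCycle x y → σ.SameCycle x y := by
    intro x y hxy
    exact Jrel_collapse h (sc_swap_mul_le hxy)
  let g : Quotient (Equiv.Perm.SameCycle.setoid σ') → Quotient (Equiv.Perm.SameCycle.setoid σ) :=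
    Quotient.map' id (fun x y hxy => hle x y hxy)
  have hg : ∀ x : Fin n, g (Quotient.mk _ x) = Quotient.mk _ x := fun x => rfl
  refine card_succ_of g ?_ (Quotient.mk _ a) (Quotient.mk _ b) ?_ ?_ ?_
  · intro q
    induction q using Quotient.ind with
    | _ x => exact ⟨Quotient.mk _ x, rfl⟩
  · intro hcon
    exact hno (Quotient.exact hcon)
  · rw [hg, hg]
    exact Quotient.sound h
  · intro q r
    induction q using Quotient.ind with
    | _ x =>
    induction r using Quotient.ind with
    | _ y =>
    intro hqr
    rw [hg, hg] at hqr
    have hxy : σ.SameCycle x y := Quotient.exact hqr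
    have : σ = swap a b * σ' := sigma_eq_swap_mul σ a b
    have hJ : Jrel σ' a b x y := sc_swap_mul_le (by rwa [← this])
    rcases hJ with h' | ⟨ha', hb'⟩ | ⟨ha', hb'⟩
    · exact Or.inl (Quotient.sound h')
    · exact Or.inr ⟨Or.inl (Quotient.sound ha'), Or.inr (Quotient.sound hb')⟩
    · exact Or.inr ⟨Or.inr (Quotient.sound ha'), Or.inl (Quotient.sound hb')⟩

lemma Nc_merge {σ : Perm (Fin n)} {a b : Fin n} (hab : a ≠ b) (h : ¬σ.SameCycle a b) :
    Nc σ = Nc (swap a b * σ) + 1 := by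
  set σ' := swap a b * σ with hσ'
  have hyes : σ'.SameCycle a b := (sc_or σ a b hab).resolve_left h
  have hle : ∀ x y : Fin n, σ.SameCycle x y → σ'.SameCycle x y := by
    intro x y hxy
    have hs : σ = swap a b * σ' := sigma_eq_swap_mul σ a b
    exact Jrel_collapse hyes (sc_swap_mul_le (by rwa [← hs]))
  let g : Quotient (Equiv.Perm.SameCycle.setoid σ) → Quotient (Equiv.Perm.SameCycle.setoid σ') :=
    Quotient.map' id (fun x y hxy => hle x y hxy)
  have hg : ∀ x : Fin n, g (Quotient.mk _ x) = Quotient.mk _ x := fun x => rfl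
  refine card_succ_of g ?_ (Quotient.mk _ a) (Quotient.mk _ b) ?_ ?_ ?_
  · intro q
    induction q using Quotient.ind with
    | _ x => exact ⟨Quotient.mk _ x, rfl⟩
  · intro hcon
    exact h (Quotient.exact hcon)
  · rw [hg, hg]
    exact Quotient.sound hyes
  · intro q r
    induction q using Quotient.ind with
    | _ x =>
    induction r using Quotient.ind with
    | _ y =>
    intro hqr
    rw [hg, hg] at hqr
    have hxy : σ'.SameCycle x y := Quotient.exact hqr
    have hJ : Jrel σ a b x y := sc_swap_mul_le hxy
    rcases hJ with h' | ⟨ha', hb'⟩ | ⟨ha', hb'⟩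
    · exact Or.inl (Quotient.sound h')
    · exact Or.inr ⟨Or.inl (Quotient.sound ha'), Or.inr (Quotient.sound hb')⟩
    · exact Or.inr ⟨Or.inr (Quotient.sound ha'), Or.inl (Quotient.sound hb')⟩

lemma perm_exists_ne {σ : Perm (Fin n)} (h : σ ≠ 1) : ∃ a, σ a ≠ a := by
  by_contra hcon
  push_neg at hcon
  exact h (Equiv.ext fun x => hcon x)

lemma Nc_lt_of_ne_one {σ : Perm (Fin n)} (h : σ ≠ 1) : Nc σ + 1 ≤ n := by
  obtain ⟨a, ha⟩ := perm_exists_ne h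
  have hsc : σ.SameCycle a (σ a) := ⟨1, by simp⟩
  have := Nc_split (Ne.symm ha) hsc
  have h2 := Nc_le (swap a (σ a) * σ)
  omega

lemma le_length_add_Nc : ∀ l : List (Perm (Fin n)), (∀ τ ∈ l, τ.IsSwap) →
    n ≤ l.length + Nc l.prod := by
  intro l
  induction l with
  | nil => intro _; simp [Nc_one]
  | cons τ l ih =>
    intro hl
    have hlt := ih (fun t ht => hl t (List.mem_cons_of_mem τ ht))
    obtain ⟨a, b, hab, rfl⟩ := hl τ List.mem_cons_self
    rw [List.prod_cons, List.length_cons]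
    by_cases hsc : (l.prod).SameCycle a b
    · have := Nc_split hab hsc
      omega
    · have := Nc_merge hab hsc
      omega

lemma reflLen_le_of_Nc : ∀ (k : ℕ) (σ : Perm (Fin n)), n ≤ Nc σ + k → reflLen σ ≤ k := by
  intro k
  induction k with
  | zero =>
    intro σ h
    have hone : σ = 1 := by
      by_contra hne
      have := Nc_lt_of_ne_one hne
      omega
    rw [hone, reflLen_one]
  | succ k ih =>
    intro σ h
    by_cases hone : σ = 1
    · rw [hone, reflLen_one]; omega
    · obtain ⟨a, ha⟩ := perm_exists_ne hone
      have hsc : σ.SameCycle a (σ a) := ⟨1, by simp⟩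
      set σ' := swap a (σ a) * σ with hσ'
      have hsplit := Nc_split (Ne.symm ha) hsc
      rw [← hσ'] at hsplit
      have hle := ih σ' (by omega)
      have hback : σ = swap a (σ a) * σ' := sigma_eq_swap_mul σ a (σ a)
      calc reflLen σ = reflLen (swap a (σ a) * σ') := by rw [← hback]
        _ ≤ reflLen (swap a (σ a)) + reflLen σ' := reflLen_mul_le _ _
        _ ≤ 1 + k := by
            have := reflLen_swap (Ne.symm ha)
            omega
        _ = k + 1 := by omega

/-- Key formula: reflection length = n - number of orbits. -/
theorem reflLen_add_Nc (σ : Perm (Fin n)) : reflLen σ + Nc σ = n := by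
  obtain ⟨l, hl, hlen, hprod⟩ := exists_minword σ
  have h1 : n ≤ reflLen σ + Nc σ := by
    have := le_length_add_Nc l hl
    rw [hlen, hprod] at this
    omega
  have h2 : reflLen σ ≤ n - Nc σ := reflLen_le_of_Nc (n - Nc σ) σ (by have := Nc_le σ; omega)
  have := Nc_le σ
  omega

/-- Orbit refinement under absolute order. -/
theorem sc_le_of_absLe : ∀ (k : ℕ) (x y : Perm (Fin n)), reflLen x = k → absLe x y →
    ∀ p q : Fin n, x.SameCycle p q → y.SameCycle p q := by
  intro k
  induction k using Nat.strong_induction_on with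
  | _ k ih =>
    intro x y hk hxy p q hpq
    by_cases hx1 : x = 1
    · rw [hx1] at hpq
      rw [Equiv.Perm.sameCycle_one] at hpq
      rw [hpq]
    · obtain ⟨l, hl, hlen, hprod⟩ := exists_minword x
      have hk0 : k ≠ 0 := by
        intro h; rw [h] at hk; exact hx1 ((reflLen_eq_zero_iff x).mp hk)
      match l, hlen, hprod, hl with
      | [], hlen, hprod, hl => exact absurd (by simpa using hprod.symm) hx1
      | t :: l', hlen, hprod, hl =>
        obtain ⟨a, b, hab, hts⟩ := hl t List.mem_cons_self
        set x' := l'.prod with hx'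
        have hxeq : x = t * x' := by rw [← hprod, List.prod_cons]
        have hlx'le : reflLen x' ≤ l'.length := reflLen_le_length x' l'
          (fun s hs => hl s (List.mem_cons_of_mem t hs)) rfl
        have hlen' : l'.length + 1 = reflLen x := by
          rw [← hlen]; simp
        have hxle : reflLen x ≤ 1 + reflLen x' := by
          rw [hxeq]
          have h1 : reflLen t ≤ 1 := by rw [hts]; rw [reflLen_swap hab]
          have := reflLen_mul_le t x'
          omega
        have hlx' : reflLen x' + 1 = reflLen x := by omega
        -- x' ≤ y
        have hx'y : absLe x' y := by
          unfold absLe at hxy ⊢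
          have t1 := triangle x' y
          have t2 : reflLen (x'⁻¹ * y) ≤ 1 + reflLen (x⁻¹ * y) := by
            have hconj : x'⁻¹ * x = x'⁻¹ * t * x'⁻¹⁻¹ := by
              rw [hxeq]; group
            have hc : reflLen (x'⁻¹ * x) = 1 := by
              rw [hconj, reflLen_conj, hts, reflLen_swap hab]
            have := reflLen_mul_le (x'⁻¹ * x) (x⁻¹ * y)
            rw [hc] at this
            calc reflLen (x'⁻¹ * y) = reflLen (x'⁻¹ * x * (x⁻¹ * y)) := by
                  congr 1; group
              _ ≤ 1 + reflLen (x⁻¹ * y) := this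
          omega
        have hSCx' := ih (reflLen x') (by omega) x' y rfl hx'y
        -- SameCycle y a b
        have htley : y.SameCycle a b := by
          have hty : reflLen (t * y) + 1 ≤ reflLen y := by
            have h1 : t * y = x' * ((t * x')⁻¹ * y) := by
              have hinv : t * (t * x') = x' := by rw [← mul_assoc, hts, swap_mul_self, one_mul]
              calc t * y = t * ((t * x') * ((t * x')⁻¹ * y)) := by group
                _ = x' * ((t * x')⁻¹ * y) := by rw [← mul_assoc, hinv]
            rw [← hxeq] at h1
            have h2 := reflLen_mul_le x' (x⁻¹ * y)
            rw [← h1] at h2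
            unfold absLe at hxy
            omega
          by_contra hnot
          rw [hts] at hty
          have hmerge := Nc_merge hab (show ¬ y.SameCycle a b from hnot)
          have hf1 := reflLen_add_Nc y
          have hf2 := reflLen_add_Nc (swap a b * y)
          omega
        -- conclude
        have hJ : Jrel x' a b p q := by
          apply sc_swap_mul_le
          rw [← hts, ← hxeq]
          exact hpq
        rcases hJ with h' | ⟨h1, h2⟩ | ⟨h1, h2⟩
        · exact hSCx' p q h'
        · exact ((hSCx' p a h1).trans htley).trans (hSCx' q b h2).symm
        · exact ((hSCx' p b h1).trans htley.symm).trans (hSCx' q a h2).symm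

theorem sc_le_of_absLe' {x y : Perm (Fin n)} (h : absLe x y) {p q : Fin n}
    (hpq : x.SameCycle p q) : y.SameCycle p q :=
  sc_le_of_absLe (reflLen x) x y rfl h p q hpq

/-! ### Positional arithmetic on `Fin (N+1)` -/

open Fin.NatCast

variable {N : ℕ}

def stp (i : Fin (N+1)) (k : ℕ) : Fin (N+1) := i + (k : Fin (N+1))

lemma stp_zero (i : Fin (N+1)) : stp i 0 = i := by simp [stp]

lemma stp_add (i : Fin (N+1)) (j k : ℕ) : stp i (j + k) = stp (stp i j) k := by
  simp only [stp, Nat.cast_add]; rw [add_assoc]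

lemma stp_self (i : Fin (N+1)) : stp i (N+1) = i := by
  simp [stp, Fin.natCast_self]

def pos (i j : Fin (N+1)) : ℕ := ((j - i : Fin (N+1)) : ℕ)

lemma pos_lt (i j : Fin (N+1)) : pos i j < N+1 := Fin.is_lt _

lemma stp_pos (i j : Fin (N+1)) : stp i (pos i j) = j := by
  simp only [stp, pos, Fin.cast_val_eq_self]
  exact add_sub_cancel i j

lemma pos_eq_zero_iff (i j : Fin (N+1)) : pos i j = 0 ↔ j = i := by
  show (j - i : Fin (N+1)).val = 0 ↔ j = i
  rw [← sub_eq_zero (a := j) (b := i)]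
  constructor
  · intro h; exact Fin.ext (by simp [h])
  · intro h; rw [h]; rfl

lemma pos_stp (i : Fin (N+1)) (k : ℕ) : pos i (stp i k) = k % (N+1) := by
  simp only [stp, pos, add_sub_cancel_left]
  exact Fin.val_natCast k (N+1)

lemma stp_cong (i : Fin (N+1)) (j k : ℕ) (h : j % (N+1) = k % (N+1)) : stp i j = stp i k := by
  simp only [stp]
  congr 1
  apply Fin.ext
  rw [Fin.val_natCast, Fin.val_natCast, h]

lemma stp_inj {i : Fin (N+1)} {j k : ℕ} (h : stp i j = stp i k) : j % (N+1) = k % (N+1) := by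
  have := congrArg (pos i) h
  rwa [pos_stp, pos_stp] at this

lemma pos_add (a z : Fin (N+1)) (k : ℕ) : pos a (stp z k) = (pos a z + k) % (N+1) := by
  have : stp z k = stp a (pos a z + k) := by rw [stp_add, stp_pos]
  rw [this, pos_stp]

lemma finRotate_eq_stp (i : Fin (N+1)) : (finRotate (N+1)) i = stp i 1 := by
  rw [finRotate_succ_apply]
  simp [stp]

lemma finRotate_pow (k : ℕ) (i : Fin (N+1)) : ((finRotate (N+1)) ^ k) i = stp i k := by
  induction k with
  | zero => simp [stp_zero]
  | succ k ih =>
    rw [pow_succ' (finRotate (N+1)) k]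
    show (finRotate (N+1)) (((finRotate (N+1)) ^ k) i) = _
    rw [ih, finRotate_eq_stp, ← stp_add]

lemma finRotate_sameCycle (i j : Fin (N+1)) : (finRotate (N+1)).SameCycle i j :=
  sameCycle_nat (pos i j) (by rw [finRotate_pow, stp_pos])

/-! ### The canonical permutation attached to an equivalence relation -/

lemma kex (E : Fin (N+1) → Fin (N+1) → Prop) (hE : Equivalence E) (i : Fin (N+1)) :
    ∃ k, 0 < k ∧ E (stp i k) i :=
  ⟨N+1, Nat.succ_pos N, by rw [stp_self]; exact hE.refl i⟩

noncomputable def kmin (E : Fin (N+1) → Fin (N+1) → Prop) (hE : Equivalence E)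
    (i : Fin (N+1)) : ℕ :=
  @Nat.find _ (Classical.decPred _) (kex E hE i)

lemma kmin_pos (E : Fin (N+1) → Fin (N+1) → Prop) (hE : Equivalence E) (i : Fin (N+1)) :
    0 < kmin E hE i :=
  (@Nat.find_spec _ (Classical.decPred _) (kex E hE i)).1

lemma kmin_rel (E : Fin (N+1) → Fin (N+1) → Prop) (hE : Equivalence E) (i : Fin (N+1)) :
    E (stp i (kmin E hE i)) i :=
  (@Nat.find_spec _ (Classical.decPred _) (kex E hE i)).2

lemma kmin_le (E : Fin (N+1) → Fin (N+1) → Prop) (hE : Equivalence E) {i : Fin (N+1)} {k : ℕ}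
    (hk : 0 < k) (h : E (stp i k) i) : kmin E hE i ≤ k :=
  @Nat.find_le _ _ (Classical.decPred _) (kex E hE i) ⟨hk, h⟩

lemma kmin_min (E : Fin (N+1) → Fin (N+1) → Prop) (hE : Equivalence E) {i : Fin (N+1)} {j : ℕ}
    (hj : 0 < j) (hlt : j < kmin E hE i) : ¬ E (stp i j) i := fun hcon =>
  @Nat.find_min _ (Classical.decPred _) (kex E hE i) _ hlt ⟨hj, hcon⟩

noncomputable def nxt (E : Fin (N+1) → Fin (N+1) → Prop) (hE : Equivalence E) :
    Fin (N+1) → Fin (N+1) := fun i => stp i (kmin E hE i)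

lemma nxt_rel (E : Fin (N+1) → Fin (N+1) → Prop) (hE : Equivalence E) (i : Fin (N+1)) :
    E (nxt E hE i) i := kmin_rel E hE i

lemma nxt_inj (E : Fin (N+1) → Fin (N+1) → Prop) (hE : Equivalence E) :
    Function.Injective (nxt E hE) := by
  intro i j h
  by_contra hne
  set d := pos i j with hd
  have hd0 : 0 < d := by
    rcases Nat.eq_zero_or_pos d with h' | h'
    · exact absurd ((pos_eq_zero_iff i j).mp h') (Ne.symm hne)
    · exact h'
  have hdlt : d < N+1 := pos_lt i j
  have hij : E i j := by
    have h1 := nxt_rel E hE i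
    have h2 := nxt_rel E hE j
    rw [h] at h1
    exact hE.trans (hE.symm h1) h2
  have hkd : kmin E hE i ≤ d := kmin_le E hE hd0 (by rw [hd, stp_pos]; exact hE.symm hij)
  have hkj : kmin E hE j ≤ (N+1) - d := by
    refine kmin_le E hE (by omega) ?_
    have hji : stp j ((N+1) - d) = i := by
      have h1 : stp j ((N+1) - d) = stp i (d + ((N+1) - d)) := by
        rw [stp_add, hd, stp_pos]
      rw [h1]
      have : d + ((N+1) - d) = N+1 := by omega
      rw [this, stp_self]
    rw [hji]
    exact hij
  have hcong : kmin E hE i % (N+1) = (d + kmin E hE j) % (N+1) := by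
    apply stp_inj (i := i)
    have h2 : stp i (d + kmin E hE j) = nxt E hE j := by
      rw [stp_add, hd, stp_pos]; rfl
    rw [h2, ← h]; rfl
  have hKlt : kmin E hE i % (N+1) = kmin E hE i := Nat.mod_eq_of_lt (by omega)
  have hkj0 : 0 < kmin E hE j := kmin_pos E hE j
  have hki0 : 0 < kmin E hE i := kmin_pos E hE i
  rcases Nat.lt_or_ge (d + kmin E hE j) (N+1) with hcase | hcase
  · rw [Nat.mod_eq_of_lt hcase] at hcong
    omega
  · have heq : d + kmin E hE j = N+1 := by omega
    rw [heq, Nat.mod_self] at hcong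
    omega

noncomputable def mPerm (E : Fin (N+1) → Fin (N+1) → Prop) (hE : Equivalence E) :
    Perm (Fin (N+1)) :=
  Equiv.ofBijective (nxt E hE) (Finite.injective_iff_bijective.mp (nxt_inj E hE))

lemma mPerm_apply (E : Fin (N+1) → Fin (N+1) → Prop) (hE : Equivalence E) (i : Fin (N+1)) :
    mPerm E hE i = nxt E hE i := rfl

lemma sc_of_rel (E : Fin (N+1) → Fin (N+1) → Prop) (hE : Equivalence E) :
    ∀ (d : ℕ) (i j : Fin (N+1)), j = stp i d → E i j → (mPerm E hE).SameCycle i j := by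
  intro d
  induction d using Nat.strong_induction_on with
  | _ d ih =>
    intro i j hj hij
    rcases Nat.eq_zero_or_pos d with h0 | h0
    · rw [h0, stp_zero] at hj
      rw [hj]
    · have hkd : kmin E hE i ≤ d := kmin_le E hE h0 (by rw [← hj]; exact hE.symm hij)
      set k := kmin E hE i with hk
      have hnj : j = stp (nxt E hE i) (d - k) := by
        show j = stp (stp i k) (d - k)
        rw [← stp_add]
        have : k + (d - k) = d := by omega
        rw [this, ← hj]
      have hrel : E (nxt E hE i) j := hE.trans (nxt_rel E hE i) hij
      have hki0 : 0 < k := kmin_pos E hE i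
      have hsc2 : (mPerm E hE).SameCycle (nxt E hE i) j := ih (d - k) (by omega) _ _ hnj hrel
      exact (sameCycle_nat 1 (by rw [pow_one]; rfl)).trans hsc2

lemma mPerm_sameCycle_iff (E : Fin (N+1) → Fin (N+1) → Prop) (hE : Equivalence E)
    (i j : Fin (N+1)) : (mPerm E hE).SameCycle i j ↔ E i j := by
  constructor
  · exact fun h => reach hE (fun x => hE.symm (nxt_rel E hE x)) h
  · intro h
    exact sc_of_rel E hE (pos i j) i j (stp_pos i j).symm h

lemma eq_mPerm (E : Fin (N+1) → Fin (N+1) → Prop) (hE : Equivalence E) (x : Perm (Fin (N+1)))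
    (h1 : ∀ z, E z (x z))
    (h2 : ∀ z j, 0 < j → j < (if x z = z then N+1 else pos z (x z)) → ¬ E (stp z j) z) :
    x = mPerm E hE := by
  apply Equiv.ext
  intro z
  set D := if x z = z then N+1 else pos z (x z) with hD
  have hD0 : 0 < D := by
    rw [hD]
    split
    · omega
    · rename_i hne
      rcases Nat.eq_zero_or_pos (pos z (x z)) with h' | h'
      · exact absurd ((pos_eq_zero_iff z (x z)).mp h') hne
      · exact h'
  have hxz : x z = stp z D := by
    rw [hD]
    split
    · rename_i h; rw [h, stp_self]
    · rw [stp_pos]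
  have hk : kmin E hE z = D := by
    refine le_antisymm (kmin_le E hE hD0 (by rw [← hxz]; exact hE.symm (h1 z))) ?_
    by_contra hcon
    exact h2 z (kmin E hE z) (kmin_pos E hE z) (by omega) (kmin_rel E hE z)
  show x z = stp z (kmin E hE z)
  rw [hk, hxz]

lemma top_equiv : Equivalence (fun (_ _ : Fin (N+1)) => True) :=
  ⟨fun _ => trivial, fun {_ _} _ => trivial, fun {_ _ _} _ _ => trivial⟩

lemma mPerm_top : mPerm (fun (_ _ : Fin (N+1)) => True) top_equiv = finRotate (N+1) := by
  refine (eq_mPerm _ top_equiv (finRotate (N+1)) (fun _ => trivial) ?_).symm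
  intro z j hj0 hjlt _
  by_cases hN : N = 0
  · subst hN
    split at hjlt
    · omega
    · have := pos_lt z ((finRotate (0+1)) z); omega
  · have hfz : (finRotate (N+1)) z = stp z 1 := finRotate_eq_stp z
    have hne : (finRotate (N+1)) z ≠ z := by
      rw [hfz]
      intro h
      have h2 : stp z 1 = stp z 0 := by rw [h, stp_zero]
      have := stp_inj h2
      rw [Nat.mod_eq_of_lt (by omega), Nat.mod_eq_of_lt (by omega)] at this
      omega
    rw [if_neg hne, hfz, pos_stp, Nat.mod_eq_of_lt (by omega)] at hjlt
    omega

def noncross (E : Fin (N+1) → Fin (N+1) → Prop) : Prop :=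
  ∀ (i : Fin (N+1)) (p q r : ℕ), 0 < p → p < q → q < r → r < N+1 →
    E i (stp i q) → E (stp i p) (stp i r) → E i (stp i p)

lemma noncross_top : noncross (fun (_ _ : Fin (N+1)) => True) := by
  intro _ _ _ _ _ _ _ _ _ _; trivial

lemma noncross_inf {E F : Fin (N+1) → Fin (N+1) → Prop} (hE : noncross E) (hF : noncross F) :
    noncross (fun x y => E x y ∧ F x y) := by
  intro i p q r h1 h2 h3 h4 hq hpr
  exact ⟨hE i p q r h1 h2 h3 h4 hq.1 hpr.1, hF i p q r h1 h2 h3 h4 hq.2 hpr.2⟩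

lemma inf_equiv {E F : Fin (N+1) → Fin (N+1) → Prop} (hE : Equivalence E) (hF : Equivalence F) :
    Equivalence (fun x y => E x y ∧ F x y) :=
  ⟨fun x => ⟨hE.refl x, hF.refl x⟩, fun h => ⟨hE.symm h.1, hF.symm h.2⟩,
   fun h h' => ⟨hE.trans h.1 h'.1, hF.trans h.2 h'.2⟩⟩

/-! ### Splitting a class of a noncrossing partition -/

lemma mod_two_cases (s m : ℕ) (h0 : 0 < m) (h : s < 2*m) :
    (s % m = s ∧ s < m) ∨ (s % m = s - m ∧ m ≤ s) := by
  rcases Nat.lt_or_ge s m with h' | h'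
  · exact Or.inl ⟨Nat.mod_eq_of_lt h', h'⟩
  · refine Or.inr ⟨?_, h'⟩
    rw [Nat.mod_eq_sub_mod h', Nat.mod_eq_of_lt (by omega)]

lemma pos_self (a : Fin (N+1)) : pos a a = 0 := (pos_eq_zero_iff a a).mpr rfl

lemma pos_ne_zero {a z : Fin (N+1)} (h : z ≠ a) : 0 < pos a z := by
  rcases Nat.eq_zero_or_pos (pos a z) with h' | h'
  · exact absurd ((pos_eq_zero_iff a z).mp h') h
  · exact h'

lemma stp_pos_add (a z : Fin (N+1)) (k : ℕ) : stp z k = stp a (pos a z + k) := by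
  rw [stp_add, stp_pos]

def arc2 (a b z : Fin (N+1)) : Prop := 0 < pos a z ∧ pos a z ≤ pos a b

def splitRel (F : Fin (N+1) → Fin (N+1) → Prop) (a b : Fin (N+1)) :
    Fin (N+1) → Fin (N+1) → Prop :=
  fun z z' => F z z' ∧ (F z a → (arc2 a b z ↔ arc2 a b z'))

lemma splitRel_le {F : Fin (N+1) → Fin (N+1) → Prop} {a b z z' : Fin (N+1)}
    (h : splitRel F a b z z') : F z z' := h.1

lemma splitRel_equiv (F : Fin (N+1) → Fin (N+1) → Prop) (hF : Equivalence F)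
    (a b : Fin (N+1)) : Equivalence (splitRel F a b) := by
  constructor
  · exact fun z => ⟨hF.refl z, fun _ => Iff.rfl⟩
  · rintro z z' ⟨h1, h2⟩
    exact ⟨hF.symm h1, fun hz'a => (h2 (hF.trans h1 hz'a)).symm⟩
  · rintro z z' z'' ⟨h1, h2⟩ ⟨h1', h2'⟩
    refine ⟨hF.trans h1 h1', fun hza => ?_⟩
    have hz'a : F z' a := hF.trans (hF.symm h1) hza
    exact (h2 hza).trans (h2' hz'a)

lemma splitRel_noncross {F : Fin (N+1) → Fin (N+1) → Prop} (hF : Equivalence F)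
    (hNC : noncross F) (a b : Fin (N+1)) (hab : a ≠ b) (hFab : F a b) :
    noncross (splitRel F a b) := by
  intro i p q r hp0 hpq hqr hrn hq hpr
  have hFip : F i (stp i p) := hNC i p q r hp0 hpq hqr hrn hq.1 hpr.1
  refine ⟨hFip, fun hia => ?_⟩
  have harcq := hq.2 hia
  have hpa : F (stp i p) a := hF.trans (hF.symm hFip) hia
  have harcr := hpr.2 hpa
  -- positions
  set β := pos a b with hβ
  have hβ0 : 0 < β := pos_ne_zero (Ne.symm hab)
  have hβn : β < N+1 := pos_lt a b
  set α := pos a i with hα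
  have hαn : α < N+1 := pos_lt a i
  have hvp : pos a (stp i p) = (α + p) % (N+1) := pos_add a i p
  have hvq : pos a (stp i q) = (α + q) % (N+1) := pos_add a i q
  have hvr : pos a (stp i r) = (α + r) % (N+1) := pos_add a i r
  have cp := mod_two_cases (α + p) (N+1) (by omega) (by omega)
  have cq := mod_two_cases (α + q) (N+1) (by omega) (by omega)
  have cr := mod_two_cases (α + r) (N+1) (by omega) (by omega)
  unfold arc2 at harcq harcr ⊢
  rw [hvq] at harcq
  rw [hvp] at harcr ⊢
  rw [hvr] at harcr
  rw [← hβ] at harcq harcr ⊢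
  rw [← hα] at harcq
  omega

lemma split_perm (F : Fin (N+1) → Fin (N+1) → Prop) (hF : Equivalence F)
    (a b : Fin (N+1)) (hab : a ≠ b) (hFab : F a b) :
    mPerm F hF * swap a b = mPerm (splitRel F a b) (splitRel_equiv F hF a b) := by
  set y := mPerm F hF with hy
  set β := pos a b with hβ
  have hβ0 : 0 < β := pos_ne_zero (Ne.symm hab)
  have hβn : β < N+1 := pos_lt a b
  have hsab : stp a β = b := stp_pos a b
  set ka := kmin F hF a with hka
  set kb := kmin F hF b with hkb
  have hka0 : 0 < ka := kmin_pos F hF a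
  have hkb0 : 0 < kb := kmin_pos F hF b
  have hkaβ : ka ≤ β := kmin_le F hF hβ0 (by rw [hsab]; exact hF.symm hFab)
  have hkbβ : kb ≤ (N+1) - β := by
    refine kmin_le F hF (by omega) ?_
    have h1 : stp b ((N+1) - β) = a := by
      rw [stp_pos_add a b, ← hβ]
      have : β + ((N+1) - β) = N+1 := by omega
      rw [this, stp_self]
    rw [h1]; exact hFab
  have hya : y a = stp a ka := rfl
  have hyb : y b = stp b kb := rfl
  apply eq_mPerm
  · -- ∀ z, splitRel z (x z)
    intro z
    by_cases hza : z = a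
    · subst hza
      have hxz : (y * swap z b) z = stp b kb := by
        show y (swap z b z) = _
        rw [swap_apply_left, hyb]
      rw [hxz]
      have hrel : F (stp b kb) b := kmin_rel F hF b
      refine ⟨hF.trans hFab (hF.symm hrel), fun _ => ?_⟩
      have hlhs : ¬ arc2 z b z := by
        unfold arc2
        rw [pos_self]
        omega
      have hrhs : ¬ arc2 z b (stp b kb) := by
        unfold arc2
        rw [pos_add, ← hβ]
        rcases mod_two_cases (β + kb) (N+1) (by omega) (by omega) with ⟨h1, h2⟩ | ⟨h1, h2⟩ <;>
          omega
      exact iff_of_false hlhs hrhs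
    · by_cases hzb : z = b
      · subst hzb
        have hxz : (y * swap a z) z = stp a ka := by
          show y (swap a z z) = _
          rw [swap_apply_right, hya]
        rw [hxz]
        have hrel : F (stp a ka) a := kmin_rel F hF a
        refine ⟨hF.trans (hF.symm hFab) (hF.symm hrel), fun _ => ?_⟩
        have hlhs : arc2 a z z := by
          unfold arc2
          rw [← hβ]
          omega
        have hrhs : arc2 a z (stp a ka) := by
          unfold arc2
          rw [pos_add, pos_self, Nat.zero_add, Nat.mod_eq_of_lt (by omega), ← hβ]
          omega
        exact iff_of_true hlhs hrhs
      · have hxz : (y * swap a b) z = stp z (kmin F hF z) := by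
          show y (swap a b z) = _
          rw [swap_apply_of_ne_of_ne hza hzb]
          rfl
        rw [hxz]
        set kz := kmin F hF z with hkz
        have hkz0 : 0 < kz := kmin_pos F hF z
        have hrelz : F (stp z kz) z := kmin_rel F hF z
        refine ⟨hF.symm hrelz, fun hFza => ?_⟩
        set t := pos a z with ht
        have ht0 : 0 < t := pos_ne_zero hza
        have htn : t < N+1 := pos_lt a z
        have htβ : t ≠ β := by
          intro h
          apply hzb
          have h2 : stp a t = z := stp_pos a z
          rw [← h2, h, hsab]
        have hposyz : pos a (stp z kz) = (t + kz) % (N+1) := by rw [pos_add]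
        rcases Nat.lt_or_ge t β with hcase | hcase
        · have hkzle : kz ≤ β - t := by
            refine kmin_le F hF (by omega) ?_
            have h1 : stp z (β - t) = b := by
              rw [stp_pos_add a z, ← ht]
              have : t + (β - t) = β := by omega
              rw [this, hsab]
            rw [h1]
            exact hF.trans (hF.symm hFab) (hF.symm hFza)
          have harc1 : arc2 a b z := by unfold arc2; rw [← ht, ← hβ]; omega
          have harc2' : arc2 a b (stp z kz) := by
            unfold arc2
            rw [hposyz, Nat.mod_eq_of_lt (by omega), ← hβ]
            omega
          exact iff_of_true harc1 harc2'
        · have hcase' : β < t := by omega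
          have hkzle : kz ≤ (N+1) - t := by
            refine kmin_le F hF (by omega) ?_
            have h1 : stp z ((N+1) - t) = a := by
              rw [stp_pos_add a z, ← ht]
              have : t + ((N+1) - t) = N+1 := by omega
              rw [this, stp_self]
            rw [h1]
            exact hF.symm hFza
          have harc1 : ¬ arc2 a b z := by unfold arc2; rw [← ht, ← hβ]; omega
          have harc2' : ¬ arc2 a b (stp z kz) := by
            unfold arc2
            rw [hposyz, ← hβ]
            rcases mod_two_cases (t + kz) (N+1) (by omega) (by omega) with ⟨h1, h2⟩ | ⟨h1, h2⟩ <;>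
              omega
          exact iff_of_false harc1 harc2'
  · -- minimality
    intro z j hj0 hjlt hcon
    obtain ⟨hconF, hconArc⟩ := hcon
    have hjN : j < N+1 := by
      by_cases hfix : (y * swap a b) z = z
      · rw [if_pos hfix] at hjlt; omega
      · rw [if_neg hfix] at hjlt
        have := pos_lt z ((y * swap a b) z)
        omega
    by_cases hza : z = a
    · subst hza
      have hxz : (y * swap z b) z = stp z (β + kb) := by
        show y (swap z b z) = _
        rw [swap_apply_left, hyb, stp_pos_add z b, ← hβ]
      have harcz : ¬ arc2 z b z := by unfold arc2; rw [pos_self]; omega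
      have harcs : ¬ arc2 z b (stp z j) := fun h => harcz ((hconArc hconF).mp h)
      have hposj : pos z (stp z j) = j := by rw [pos_stp, Nat.mod_eq_of_lt hjN]
      have hjβ : β < j := by
        by_contra hle
        apply harcs
        unfold arc2
        rw [hposj, ← hβ]
        omega
      have hjn : j < β + kb := by
        rcases Nat.lt_or_ge (β + kb) (N+1) with hlt' | hge'
        · by_cases hfix : (y * swap z b) z = z
          · exfalso
            have h2 := stp_inj (i := z) (j := β + kb) (k := 0)
              (by rw [← hxz, hfix, stp_zero])
            rw [Nat.mod_eq_of_lt hlt', Nat.mod_eq_of_lt (by omega)] at h2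
            omega
          · rw [if_neg hfix, hxz, pos_stp, Nat.mod_eq_of_lt hlt'] at hjlt
            exact hjlt
        · have heq : β + kb = N+1 := by omega
          have hfix : (y * swap z b) z = z := by rw [hxz, heq, stp_self]
          rw [if_pos hfix] at hjlt
          omega
      have hsb : stp z j = stp b (j - β) := by
        have h4 : stp b (j - β) = stp z (β + (j - β)) := by rw [stp_pos_add z b, ← hβ]
        rw [h4]
        congr 1
        omega
      have hFsb : F (stp b (j - β)) b := by
        rw [← hsb]
        exact hF.trans hconF hFab
      exact kmin_min F hF (by omega) (show j - β < kb by omega) hFsb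
    · by_cases hzb : z = b
      · subst hzb
        have hza' : stp z ((N+1) - β) = a := by
          have h1 : stp z ((N+1) - β) = stp a (β + ((N+1) - β)) := by
            rw [stp_pos_add a z, ← hβ]
          rw [h1]
          have : β + ((N+1) - β) = N+1 := by omega
          rw [this, stp_self]
        have hxz : (y * swap a z) z = stp z (((N+1) - β) + ka) := by
          show y (swap a z z) = _
          rw [swap_apply_right, hya]
          calc stp a ka = stp (stp z ((N+1) - β)) ka := by rw [hza']
            _ = stp z ((N+1) - β + ka) := (stp_add _ _ _).symm
        have harcz : arc2 a z z := by unfold arc2; rw [← hβ]; omega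
        have hFsa : F (stp z j) a := hF.trans hconF (hF.symm hFab)
        have harcs : arc2 a z (stp z j) := (hconArc hFsa).mpr harcz
        have hposs : pos a (stp z j) = (β + j) % (N+1) := by rw [pos_add, ← hβ]
        have hjn : j < (N+1) - β + ka := by
          rcases Nat.lt_or_ge ((N+1) - β + ka) (N+1) with hlt' | hge'
          · by_cases hfix : (y * swap a z) z = z
            · exfalso
              have h2 := stp_inj (i := z) (j := (N+1) - β + ka) (k := 0)
                (by rw [← hxz, hfix, stp_zero])
              rw [Nat.mod_eq_of_lt hlt', Nat.mod_eq_of_lt (by omega)] at h2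
              omega
            · rw [if_neg hfix, hxz, pos_stp, Nat.mod_eq_of_lt hlt'] at hjlt
              exact hjlt
          · have heq : (N+1) - β + ka = N+1 := by omega
            have hfix : (y * swap a z) z = z := by rw [hxz, heq, stp_self]
            rw [if_pos hfix] at hjlt
            omega
        unfold arc2 at harcs
        rw [hposs, ← hβ] at harcs
        rcases mod_two_cases (β + j) (N+1) (by omega) (by omega) with ⟨h1, h2⟩ | ⟨h1, h2⟩
        · omega
        · set t := β + j - (N+1) with htdef
          have ht0 : 0 < t := by
            have h3 := harcs.1
            rw [h1] at h3
            omega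
          have htka : t < ka := by omega
          have hsa : stp z j = stp a t := by
            have h4 : stp z j = stp a (β + j) := by rw [stp_pos_add a z, ← hβ]
            rw [h4]
            apply stp_cong
            rw [h1, Nat.mod_eq_of_lt (show t < N+1 by omega)]
          have hFsa2 : F (stp a t) a := by rw [← hsa]; exact hFsa
          exact kmin_min F hF ht0 htka hFsa2
      · have hxz : (y * swap a b) z = stp z (kmin F hF z) := by
          show y (swap a b z) = _
          rw [swap_apply_of_ne_of_ne hza hzb]
          rfl
        set kz := kmin F hF z with hkz
        have hkz0 : 0 < kz := kmin_pos F hF z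
        have hkzn : kz ≤ N+1 := by
          refine kmin_le F hF (by omega) ?_
          rw [stp_self]
          exact hF.refl z
        have hjkz : j < kz := by
          rcases Nat.lt_or_ge kz (N+1) with hlt' | hge'
          · by_cases hfix : (y * swap a b) z = z
            · exfalso
              have h2 := stp_inj (i := z) (j := kz) (k := 0)
                (by rw [← hxz, hfix, stp_zero])
              rw [Nat.mod_eq_of_lt hlt', Nat.mod_eq_of_lt (by omega)] at h2
              omega
            · rw [if_neg hfix, hxz, pos_stp, Nat.mod_eq_of_lt hlt'] at hjlt
              exact hjlt
          · have heq : kz = N+1 := by omega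
            have hfix : (y * swap a b) z = z := by rw [hxz, heq, stp_self]
            rw [if_pos hfix] at hjlt
            omega
        exact kmin_min F hF hj0 hjkz hconF

lemma exists_split (E F : Fin (N+1) → Fin (N+1) → Prop) (hE : Equivalence E)
    (hF : Equivalence F) (hNCE : noncross E) (hEF : ∀ x y, E x y → F x y)
    (c0 c' : Fin (N+1)) (hFac : F c' c0) (hEac : ¬ E c' c0) :
    ∃ a b : Fin (N+1), F a b ∧ a ≠ b ∧ (∀ z z', E z z' → splitRel F a b z z') := by
  classical
  -- least element of the class of z (positions measured from c0)
  have μdef : ∀ z : Fin (N+1), ∃ t, t ≤ N ∧ E (stp c0 t) z := fun z =>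
    ⟨pos c0 z, by have := pos_lt c0 z; omega, by rw [stp_pos]; exact hE.refl z⟩
  set μ : Fin (N+1) → ℕ := fun z => Nat.find (μdef z) with hμ
  have μ_le : ∀ z, μ z ≤ N := fun z => (Nat.find_spec (μdef z)).1
  have μ_rel : ∀ z, E (stp c0 (μ z)) z := fun z => (Nat.find_spec (μdef z)).2
  have μ_min : ∀ z t, t ≤ N → E (stp c0 t) z → μ z ≤ t := fun z t h1 h2 =>
    Nat.find_min' (μdef z) ⟨h1, h2⟩
  have Mdef : ∀ z : Fin (N+1), ∃ s, s ≤ N ∧ E (stp c0 (N - s)) z := fun z =>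
    ⟨N - pos c0 z, by omega, by
      have h1 : N - (N - pos c0 z) = pos c0 z := by have := pos_lt c0 z; omega
      rw [h1, stp_pos]; exact hE.refl z⟩
  set M : Fin (N+1) → ℕ := fun z => N - Nat.find (Mdef z) with hM
  have M_le : ∀ z, M z ≤ N := fun z => by simp only [hM]; omega
  have M_rel : ∀ z, E (stp c0 (M z)) z := fun z => (Nat.find_spec (Mdef z)).2
  have M_max : ∀ z t, t ≤ N → E (stp c0 t) z → t ≤ M z := by
    intro z t h1 h2
    have h3 : N - t ≤ N := by omega
    have h4 : Nat.find (Mdef z) ≤ N - t :=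
      Nat.find_min' (Mdef z) ⟨h3, by rw [show N - (N - t) = t by omega]; exact h2⟩
    simp only [hM]
    omega
  -- choose the class minimizing the width M - μ
  have wdef : ∃ w, ∃ z, (F z c0 ∧ ¬ E z c0) ∧ M z - μ z = w :=
    ⟨_, c', ⟨hFac, hEac⟩, rfl⟩
  obtain ⟨z₀, ⟨hz₀F, hz₀E⟩, hz₀w⟩ := Nat.find_spec wdef
  set w₀ := Nat.find wdef with hw₀
  have hminw : ∀ s, F s c0 → ¬E s c0 → w₀ ≤ M s - μ s := by
    intro s h1 h2
    by_contra hcon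
    exact Nat.find_min wdef (by omega) ⟨s, ⟨h1, h2⟩, rfl⟩
  set μ₀ := μ z₀ with hμ₀
  set M₀ := M z₀ with hM₀
  have hEz₀c0 : ¬ E c0 z₀ := fun h => hz₀E (hE.symm h)
  have hμ0pos : 0 < μ₀ := by
    rcases Nat.eq_zero_or_pos μ₀ with h | h
    · exfalso
      have := μ_rel z₀
      rw [hμ₀] at h  -- h : μ z₀ = 0  (hμ₀ : μ₀ = μ z₀ so this should be ok)
      rw [h, stp_zero] at this
      exact hEz₀c0 this
    · exact h
  have hμM : μ₀ ≤ M₀ := M_max z₀ μ₀ (μ_le z₀) (μ_rel z₀)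
  have hM₀N : M₀ ≤ N := M_le z₀
  -- the chosen class is an interval among the elements of the big class
  have claim1 : ∀ s, F s c0 → μ₀ ≤ pos c0 s → pos c0 s ≤ M₀ → E s z₀ := by
    intro s hFs h1 h2
    by_contra hEs
    set t := pos c0 s with ht
    have hst : stp c0 t = s := stp_pos c0 s
    have htμ : t ≠ μ₀ := by
      intro h
      apply hEs
      rw [← hst, h]
      exact μ_rel z₀
    have htM : t ≠ M₀ := by
      intro h
      apply hEs
      rw [← hst, h]
      exact M_rel z₀
    have hμt : μ₀ < t := by omega
    have htM' : t < M₀ := by omega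
    have hEsc0 : ¬ E s c0 := by
      intro hEsc0
      have hcr := hNCE c0 μ₀ t M₀ hμ0pos hμt htM' (by omega)
        (by rw [hst]; exact hE.symm hEsc0)
        (hE.trans (μ_rel z₀) (hE.symm (M_rel z₀)))
      exact hEz₀c0 (hE.trans hcr (μ_rel z₀))
    -- every element of the class of s lies strictly between μ₀ and M₀
    have hbetween : ∀ t', t' ≤ N → E (stp c0 t') s → μ₀ < t' ∧ t' < M₀ := by
      intro t' ht'N hEt'
      have ht'μ : t' ≠ μ₀ := by
        intro h
        apply hEs
        rw [h] at hEt'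
        exact hE.trans (hE.symm hEt') (μ_rel z₀)
      have ht'M : t' ≠ M₀ := by
        intro h
        apply hEs
        rw [h] at hEt'
        exact hE.trans (hE.symm hEt') (M_rel z₀)
      constructor
      · by_contra hcon
        have ht'μ₀ : t' < μ₀ := by omega
        have hcr := hNCE (stp c0 t') (μ₀ - t') (t - t') (M₀ - t')
          (by omega) (by omega) (by omega) (by omega)
          (by rw [← stp_add, show t' + (t - t') = t by omega, hst]; exact hEt')
          (by rw [← stp_add, ← stp_add, show t' + (μ₀ - t') = μ₀ by omega,
                show t' + (M₀ - t') = M₀ by omega]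
              exact hE.trans (μ_rel z₀) (hE.symm (M_rel z₀)))
        rw [← stp_add, show t' + (μ₀ - t') = μ₀ by omega] at hcr
        have hμrel : E (stp c0 μ₀) z₀ := μ_rel z₀
        exact hEs (hE.trans (hE.symm hEt') (hE.trans hcr hμrel))
      · by_contra hcon
        have hM₀t' : M₀ < t' := by omega
        have hcr := hNCE (stp c0 μ₀) (t - μ₀) (M₀ - μ₀) (t' - μ₀)
          (by omega) (by omega) (by omega) (by omega)
          (by rw [← stp_add, show μ₀ + (M₀ - μ₀) = M₀ by omega]
              exact hE.trans (μ_rel z₀) (hE.symm (M_rel z₀)))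
          (by rw [← stp_add, ← stp_add, show μ₀ + (t - μ₀) = t by omega,
                show μ₀ + (t' - μ₀) = t' by omega, hst]
              exact hE.symm hEt')
        rw [← stp_add, show μ₀ + (t - μ₀) = t by omega, hst] at hcr
        exact hEs (hE.trans (hE.symm hcr) (μ_rel z₀))
    have hb1 := hbetween (μ s) (μ_le s) (μ_rel s)
    have hb2 := hbetween (M s) (M_le s) (M_rel s)
    have hμsMs : μ s ≤ M s := M_max s (μ s) (μ_le s) (μ_rel s)
    have := hminw s hFs hEsc0
    omega
  -- choose the boundary point a just before the interval
  have Adef : ∃ s, s ≤ μ₀ - 1 ∧ F (stp c0 (μ₀ - 1 - s)) c0 :=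
    ⟨μ₀ - 1, le_rfl, by rw [show μ₀ - 1 - (μ₀ - 1) = 0 by omega, stp_zero]; exact hF.refl c0⟩
  set A := μ₀ - 1 - Nat.find Adef with hA
  have hAspec : F (stp c0 A) c0 := (Nat.find_spec Adef).2
  have hAlt : A < μ₀ := by
    have := (Nat.find_spec Adef).1
    omega
  have hAmax : ∀ t, A < t → t < μ₀ → ¬ F (stp c0 t) c0 := by
    intro t h1 h2 hcon
    have hs : μ₀ - 1 - t < Nat.find Adef := by omega
    apply Nat.find_min Adef hs
    refine ⟨by omega, ?_⟩
    rw [show μ₀ - 1 - (μ₀ - 1 - t) = t by omega]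
    exact hcon
  refine ⟨stp c0 A, stp c0 M₀, ?_, ?_, ?_⟩
  · -- F a b
    exact hF.trans hAspec (hF.symm (hF.trans (hEF _ _ (M_rel z₀)) hz₀F))
  · -- a ≠ b
    intro h
    have h2 := stp_inj h
    rw [Nat.mod_eq_of_lt (by omega), Nat.mod_eq_of_lt (by omega)] at h2
    omega
  · -- refinement
    set a := stp c0 A with ha
    set b := stp c0 M₀ with hb
    have hβval : pos a b = M₀ - A := by
      have h1 : b = stp a (M₀ - A) := by
        rw [ha, ← stp_add, show A + (M₀ - A) = M₀ by omega, hb]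
      rw [h1, pos_stp, Nat.mod_eq_of_lt (by omega)]
    have hFa : F a c0 := hAspec
    have arcE : ∀ w, F w c0 → (arc2 a b w ↔ E w z₀) := by
      intro w hFw
      set τ := pos c0 w with hτ
      have hτN : τ ≤ N := by have := pos_lt c0 w; omega
      have hwτ : stp c0 τ = w := stp_pos c0 w
      rcases le_or_gt A τ with hAτ | hAτ
      · -- pos a w = τ - A
        have hposaw : pos a w = τ - A := by
          have h1 : w = stp a (τ - A) := by
            rw [ha, ← stp_add, show A + (τ - A) = τ by omega, hwτ]
          rw [h1, pos_stp, Nat.mod_eq_of_lt (by omega)]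
        constructor
        · intro harc
          obtain ⟨h1, h2⟩ := harc
          rw [hposaw] at h1 h2
          rw [hβval] at h2
          rcases Nat.lt_or_ge τ μ₀ with hcase | hcase
          · exfalso
            apply hAmax τ (by omega) hcase
            rw [hwτ]
            exact hFw
          · exact claim1 w hFw (by rw [← hτ]; omega) (by rw [← hτ]; omega)
        · intro hEw
          have h1 : μ₀ ≤ τ := μ_min z₀ τ hτN (by rw [hwτ]; exact hEw)
          have h2 : τ ≤ M₀ := M_max z₀ τ hτN (by rw [hwτ]; exact hEw)
          refine ⟨?_, ?_⟩
          · rw [hposaw]; omega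
          · rw [hposaw, hβval]; omega
      · -- τ < A : pos a w = τ + (N+1) - A, not in arc, not in class
        have hposaw : pos a w = τ + (N+1) - A := by
          have h1 : w = stp a (τ + (N+1) - A) := by
            rw [ha, ← stp_add]
            have h2 : stp c0 (A + (τ + (N+1) - A)) = stp c0 τ := by
              apply stp_cong
              have h3 : A + (τ + (N+1) - A) = τ + (N+1) := by omega
              rw [h3, Nat.add_mod_right]
            rw [h2, hwτ]
          rw [h1, pos_stp, Nat.mod_eq_of_lt (by omega)]
        refine iff_of_false ?_ ?_
        · intro harc
          obtain ⟨h1, h2⟩ := harc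
          rw [hposaw] at h2
          rw [hβval] at h2
          omega
        · intro hEw
          have h1 : μ₀ ≤ τ := μ_min z₀ τ hτN (by rw [hwτ]; exact hEw)
          omega
    intro z z' hEzz'
    refine ⟨hEF _ _ hEzz', fun hFza => ?_⟩
    have hFzc0 : F z c0 := hF.trans hFza hFa
    have hFz'c0 : F z' c0 := hF.trans (hF.symm (hEF _ _ hEzz')) hFzc0
    rw [arcE z hFzc0, arcE z' hFz'c0]
    exact ⟨fun h => hE.trans (hE.symm hEzz') h, fun h => hE.trans hEzz' h⟩

lemma mPerm_if_eq (E : Fin (N+1) → Fin (N+1) → Prop) (hE : Equivalence E) (z : Fin (N+1)) :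
    (if mPerm E hE z = z then N+1 else pos z (mPerm E hE z)) = kmin E hE z := by
  have hkn : kmin E hE z ≤ N+1 := kmin_le E hE (by omega) (by rw [stp_self]; exact hE.refl z)
  have hk0 : 0 < kmin E hE z := kmin_pos E hE z
  by_cases hfix : mPerm E hE z = z
  · rw [if_pos hfix]
    have h2 := stp_inj (i := z) (j := kmin E hE z) (k := 0)
      (by rw [show stp z (kmin E hE z) = mPerm E hE z from rfl, hfix, stp_zero])
    rcases lt_or_ge (kmin E hE z) (N+1) with h' | h'
    · rw [Nat.mod_eq_of_lt h', Nat.mod_eq_of_lt (by omega)] at h2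
      omega
    · omega
  · rw [if_neg hfix]
    have hlt : kmin E hE z < N+1 := by
      rcases lt_or_ge (kmin E hE z) (N+1) with h' | h'
      · exact h'
      · exfalso
        apply hfix
        have heq : kmin E hE z = N+1 := by omega
        show stp z (kmin E hE z) = z
        rw [heq, stp_self]
    show pos z (stp z (kmin E hE z)) = _
    rw [pos_stp, Nat.mod_eq_of_lt hlt]

lemma mPerm_congr (E F : Fin (N+1) → Fin (N+1) → Prop) (hE : Equivalence E)
    (hF : Equivalence F) (hEF : ∀ x y, E x y → F x y) (hFE : ∀ x y, F x y → E x y) :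
    mPerm E hE = mPerm F hF := by
  apply eq_mPerm F hF (mPerm E hE)
  · intro z
    exact hEF _ _ (hE.symm (nxt_rel E hE z))
  · intro z j hj0 hjlt hcon
    rw [mPerm_if_eq E hE z] at hjlt
    exact kmin_min E hE hj0 hjlt (hFE _ _ hcon)

lemma split_absLe (F : Fin (N+1) → Fin (N+1) → Prop) (hF : Equivalence F)
    (a b : Fin (N+1)) (hab : a ≠ b) (hFab : F a b) :
    absLe (mPerm (splitRel F a b) (splitRel_equiv F hF a b)) (mPerm F hF) ∧
      reflLen (mPerm (splitRel F a b) (splitRel_equiv F hF a b)) + 1 = reflLen (mPerm F hF) := by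
  set y := mPerm F hF with hy
  have hxdef : mPerm (splitRel F a b) (splitRel_equiv F hF a b) = y * swap a b :=
    (split_perm F hF a b hab hFab).symm
  set x := y * swap a b with hx
  rw [hxdef]
  have hya_ne : y a ≠ y b := fun h => hab (y.injective h)
  have hconj : x = swap (y a) (y b) * y := by
    rw [Equiv.swap_apply_apply]
    group
    exact hx
  have hsc : y.SameCycle (y a) (y b) := by
    have h1 : y.SameCycle a b := (mPerm_sameCycle_iff F hF a b).mpr hFab
    have h2 : y.SameCycle a (y a) := sameCycle_nat 1 (by simp)
    have h3 : y.SameCycle b (y b) := sameCycle_nat 1 (by simp)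
    exact (h2.symm.trans h1).trans h3
  have hNc : Nc x = Nc y + 1 := by
    rw [hconj]
    exact Nc_split hya_ne hsc
  have hf1 := reflLen_add_Nc x
  have hf2 := reflLen_add_Nc y
  have hNcx := Nc_le x
  have hNcy := Nc_le y
  have hlen : reflLen x + 1 = reflLen y := by omega
  constructor
  · unfold absLe
    have hxinv : x⁻¹ * y = swap a b := by
      rw [hx, mul_inv_rev, swap_inv]
      group
    rw [hxinv, reflLen_swap hab]
    omega
  · exact hlen

/-- Monotonicity: refinement of noncrossing partitions gives absolute order. -/
lemma mPerm_absLe : ∀ (k : ℕ) (E F : Fin (N+1) → Fin (N+1) → Prop) (hE : Equivalence E)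
    (hF : Equivalence F), noncross E → noncross F → (∀ x y, E x y → F x y) →
    reflLen (mPerm F hF) = k → absLe (mPerm E hE) (mPerm F hF) := by
  intro k
  induction k using Nat.strong_induction_on with
  | _ k ih =>
    intro E F hE hF hNCE hNCF hEF hk
    by_cases hFE : ∀ x y, F x y → E x y
    · rw [mPerm_congr E F hE hF hEF hFE]
      exact absLe_refl _
    · push_neg at hFE
      obtain ⟨c', c0, hFcc, hEcc⟩ := hFE
      obtain ⟨a, b, hFab, hab, hsub⟩ := exists_split E F hE hF hNCE hEF c0 c' hFcc hEcc
      have hNCF' := splitRel_noncross hF hNCF a b hab hFab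
      have hstep := split_absLe F hF a b hab hFab
      have hih := ih (reflLen (mPerm (splitRel F a b) (splitRel_equiv F hF a b)))
        (by omega) E (splitRel F a b) hE (splitRel_equiv F hF a b) hNCE hNCF' hsub rfl
      exact absLe_trans hih hstep.1

/-- Structure theorem: every element below the long cycle is of the form `mPerm E`
for a noncrossing equivalence `E`. -/
lemma absLe_w_structure : ∀ (k : ℕ) (x : Perm (Fin (N+1))),
    reflLen (x⁻¹ * finRotate (N+1)) = k → absLe x (finRotate (N+1)) →
    ∃ (E : Fin (N+1) → Fin (N+1) → Prop) (hE : Equivalence E), noncross E ∧ x = mPerm E hE := by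
  intro k
  induction k using Nat.strong_induction_on with
  | _ k ih =>
    intro x hk hx
    set w := finRotate (N+1) with hw
    by_cases hxw : x = w
    · exact ⟨fun _ _ => True, top_equiv, noncross_top, by rw [mPerm_top, hxw]⟩
    · have hk0 : k ≠ 0 := by
        intro h
        rw [h] at hk
        have h2 := (reflLen_eq_zero_iff _).mp hk
        rw [inv_mul_eq_one] at h2
        exact hxw h2
      obtain ⟨l, hl, hlen, hprod⟩ := exists_minword (x⁻¹ * w)
      match l, hlen, hprod, hl with
      | [], hlen, hprod, hl =>
        exfalso
        apply hk0
        rw [← hk, ← hlen]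
        rfl
      | t :: l', hlen, hprod, hl =>
        obtain ⟨a, b, hab, hts⟩ := hl t List.mem_cons_self
        set y := x * t with hydef
        have htt : t * t = 1 := by rw [hts, swap_mul_self]
        have hyw : y⁻¹ * w = l'.prod := by
          rw [hydef, mul_inv_rev]
          have : t⁻¹ = t := by rw [hts, swap_inv]
          rw [this, mul_assoc, ← hprod, List.prod_cons, ← mul_assoc, htt, one_mul]
        have hl' : ∀ s ∈ l', s.IsSwap := fun s hs => hl s (List.mem_cons_of_mem t hs)
        have hywlen : reflLen (y⁻¹ * w) + 1 = k := by
          have h1 : reflLen (y⁻¹ * w) ≤ l'.length := reflLen_le_length _ l' hl' hyw.symm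
          have h2 : l'.length + 1 = k := by
            rw [← hk, ← hlen]
            rfl
          have h3 : reflLen (x⁻¹ * w) ≤ reflLen (x⁻¹ * y) + reflLen (y⁻¹ * w) := by
            have := reflLen_mul_le (x⁻¹ * y) (y⁻¹ * w)
            rw [show x⁻¹ * y * (y⁻¹ * w) = x⁻¹ * w by group] at this
            exact this
          have h4 : reflLen (x⁻¹ * y) ≤ 1 := by
            rw [hydef, show x⁻¹ * (x * t) = t by group, hts]
            rw [reflLen_swap hab]
          omega
        have hyabs : absLe y w := by
          unfold absLe at hx ⊢
          have t1 := triangle y w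
          have t2 : reflLen y ≤ reflLen x + 1 := by
            have := reflLen_mul_le x t
            rw [hts] at this
            rw [hydef, hts]
            have h5 := reflLen_swap hab
            omega
          omega
        have hylen : reflLen y = reflLen x + 1 := by
          unfold absLe at hx hyabs
          have t2 : reflLen y ≤ reflLen x + 1 := by
            have := reflLen_mul_le x t
            rw [hts] at this
            rw [hydef, hts]
            have h5 := reflLen_swap hab
            omega
          omega
        obtain ⟨F, hF, hNCF, hyF⟩ := ih (reflLen (y⁻¹ * w)) (by omega) y rfl hyabs
        have hxy : x = y * swap a b := by
          rw [hydef, mul_assoc, ← hts, htt, mul_one]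
        -- Same cycle of a and b in y
        have hNcx := reflLen_add_Nc x
        have hNcy := reflLen_add_Nc y
        have hNceq : Nc x = Nc y + 1 := by omega
        have hconj : x = swap (y a) (y b) * y := by
          rw [Equiv.swap_apply_apply, hxy]
          group
        have hya_ne : y a ≠ y b := fun h => hab (y.injective h)
        have hscy : y.SameCycle (y a) (y b) := by
          by_contra hnot
          have := Nc_merge hya_ne hnot
          rw [← hconj] at this
          omega
        have hscab : y.SameCycle a b := by
          have h2 : y.SameCycle a (y a) := sameCycle_nat 1 (by simp)
          have h3 : y.SameCycle b (y b) := sameCycle_nat 1 (by simp)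
          exact (h2.trans hscy).trans h3.symm
        have hFab : F a b := by
          rw [hyF] at hscab
          exact (mPerm_sameCycle_iff F hF a b).mp hscab
        refine ⟨splitRel F a b, splitRel_equiv F hF a b, splitRel_noncross hF hNCF a b hab hFab, ?_⟩
        rw [← split_perm F hF a b hab hFab, ← hyF, ← hxy]

/-! ### Kreweras complementation and the lattice property -/

lemma absLe_conj {n : ℕ} (g : Perm (Fin n)) {x y : Perm (Fin n)} (h : absLe x y) :
    absLe (g * x * g⁻¹) (g * y * g⁻¹) := by
  unfold absLe at h ⊢
  have h1 : reflLen (g * x * g⁻¹) = reflLen x := reflLen_conj g x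
  have h2 : (g * x * g⁻¹)⁻¹ * (g * y * g⁻¹) = g * (x⁻¹ * y) * g⁻¹ := by group
  rw [h1, h2, reflLen_conj]
  have h3 : reflLen (g * y * g⁻¹) = reflLen y := reflLen_conj g y
  omega

lemma K_le {n : ℕ} {w z : Perm (Fin n)} (hz : absLe z w) : absLe (z⁻¹ * w) w := by
  unfold absLe at hz ⊢
  have h1 : (z⁻¹ * w)⁻¹ * w = w⁻¹ * z * w := by group
  have h2 : reflLen (w⁻¹ * z * w) = reflLen z := by
    have := reflLen_conj w⁻¹ z
    rw [inv_inv] at this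
    exact this
  rw [h1, h2]
  omega

lemma K_antitone {n : ℕ} {w p q : Perm (Fin n)} (hq : absLe q w) (hpq : absLe p q) :
    absLe (q⁻¹ * w) (p⁻¹ * w) := by
  have hpw : absLe p w := absLe_trans hpq hq
  unfold absLe at hq hpq hpw ⊢
  have h1 : (q⁻¹ * w)⁻¹ * (p⁻¹ * w) = (w⁻¹ * q) * (p⁻¹ * q) * (w⁻¹ * q)⁻¹ := by group
  rw [h1, reflLen_conj]
  have h2 : (q⁻¹ * w)⁻¹ * w = w⁻¹ * q * w := by group
  have h3 : reflLen (q⁻¹ * w) + reflLen (p⁻¹ * q) ≥ reflLen (p⁻¹ * w) := by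
    have := reflLen_mul_le (q⁻¹ * w) ((w⁻¹ * q) * (p⁻¹ * q) * (w⁻¹ * q)⁻¹)
    rw [show (q⁻¹ * w) * ((w⁻¹ * q) * (p⁻¹ * q) * (w⁻¹ * q)⁻¹) = p⁻¹ * w by group,
      reflLen_conj] at this
    omega
  omega

/-- Existence of meets in the interval `[1, w]`. -/
lemma meet_exists {N : ℕ} (u v : Perm (Fin (N+1))) (hu : absLe u (finRotate (N+1)))
    (hv : absLe v (finRotate (N+1))) :
    ∃ m : Perm (Fin (N+1)), absLe m (finRotate (N+1)) ∧ absLe m u ∧ absLe m v ∧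
      ∀ z : Perm (Fin (N+1)), absLe z (finRotate (N+1)) → absLe z u → absLe z v → absLe z m := by
  obtain ⟨Eu, hEu, hNCu, huEq⟩ := absLe_w_structure (reflLen (u⁻¹ * finRotate (N+1))) u rfl hu
  obtain ⟨Ev, hEv, hNCv, hvEq⟩ := absLe_w_structure (reflLen (v⁻¹ * finRotate (N+1))) v rfl hv
  set E : Fin (N+1) → Fin (N+1) → Prop := fun x y => Eu x y ∧ Ev x y with hE
  have hEequiv : Equivalence E := inf_equiv hEu hEv
  have hNCE : noncross E := noncross_inf hNCu hNCv
  refine ⟨mPerm E hEequiv, ?_, ?_, ?_, ?_⟩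
  · have h := mPerm_absLe (reflLen (mPerm (fun (_ _ : Fin (N+1)) => True) top_equiv)) E
      (fun _ _ => True) hEequiv top_equiv hNCE noncross_top (fun _ _ _ => trivial) rfl
    rwa [mPerm_top] at h
  · rw [huEq]
    exact mPerm_absLe _ E Eu hEequiv hEu hNCE hNCu (fun x y h => h.1) rfl
  · rw [hvEq]
    exact mPerm_absLe _ E Ev hEequiv hEv hNCE hNCv (fun x y h => h.2) rfl
  · intro z hzw hzu hzv
    obtain ⟨Ez, hEz, hNCz, hzEq⟩ := absLe_w_structure (reflLen (z⁻¹ * finRotate (N+1))) z rfl hzw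
    have hsub : ∀ x y, Ez x y → E x y := by
      intro x y hxy
      have hscz : z.SameCycle x y := by
        rw [hzEq]
        exact (mPerm_sameCycle_iff Ez hEz x y).mpr hxy
      constructor
      · have := sc_le_of_absLe' hzu hscz
        rw [huEq] at this
        exact (mPerm_sameCycle_iff Eu hEu x y).mp this
      · have := sc_le_of_absLe' hzv hscz
        rw [hvEq] at this
        exact (mPerm_sameCycle_iff Ev hEv x y).mp this
    rw [hzEq]
    exact mPerm_absLe _ Ez E hEz hEequiv hNCz hNCE hsub rfl

/-- Existence of joins in the interval `[1, w]`. -/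
lemma join_exists {N : ℕ} (u v : Perm (Fin (N+1))) (hu : absLe u (finRotate (N+1)))
    (hv : absLe v (finRotate (N+1))) :
    ∃ m : Perm (Fin (N+1)), absLe m (finRotate (N+1)) ∧ absLe u m ∧ absLe v m ∧
      ∀ z : Perm (Fin (N+1)), absLe z (finRotate (N+1)) → absLe u z → absLe v z → absLe m z := by
  set w := finRotate (N+1) with hw
  have hKu : absLe (u⁻¹ * w) w := K_le hu
  have hKv : absLe (v⁻¹ * w) w := K_le hv
  obtain ⟨m₀, hm₀w, hm₀u, hm₀v, hm₀max⟩ := meet_exists (u⁻¹ * w) (v⁻¹ * w) hKu hKv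
  simp only [← hw] at hm₀w hm₀u hm₀v hm₀max
  refine ⟨w * m₀⁻¹, ?_, ?_, ?_, ?_⟩
  · -- w * m₀⁻¹ ≤ w
    unfold absLe at hm₀w ⊢
    have h1 : (w * m₀⁻¹)⁻¹ * w = m₀ := by group
    have h2 : reflLen (w * m₀⁻¹) = reflLen (m₀⁻¹ * w) := by
      rw [show w * m₀⁻¹ = w * (m₀⁻¹ * w) * w⁻¹ by group, reflLen_conj]
    rw [h1, h2]
    omega
  · -- u ≤ w * m₀⁻¹
    have h1 : absLe ((u⁻¹ * w)⁻¹ * w) (m₀⁻¹ * w) := K_antitone hKu hm₀u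
    have h2 := absLe_conj w h1
    rw [show w * ((u⁻¹ * w)⁻¹ * w) * w⁻¹ = u by group,
      show w * (m₀⁻¹ * w) * w⁻¹ = w * m₀⁻¹ by group] at h2
    exact h2
  · have h1 : absLe ((v⁻¹ * w)⁻¹ * w) (m₀⁻¹ * w) := K_antitone hKv hm₀v
    have h2 := absLe_conj w h1
    rw [show w * ((v⁻¹ * w)⁻¹ * w) * w⁻¹ = v by group,
      show w * (m₀⁻¹ * w) * w⁻¹ = w * m₀⁻¹ by group] at h2
    exact h2
  · intro z hzw huz hvz
    have hKz : absLe (z⁻¹ * w) w := K_le hzw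
    have h1 : absLe (z⁻¹ * w) (u⁻¹ * w) := K_antitone hzw huz
    have h2 : absLe (z⁻¹ * w) (v⁻¹ * w) := K_antitone hzw hvz
    have h3 : absLe (z⁻¹ * w) m₀ := hm₀max (z⁻¹ * w) hKz h1 h2
    have h4 : absLe (m₀⁻¹ * w) ((z⁻¹ * w)⁻¹ * w) := K_antitone hm₀w h3
    have h5 := absLe_conj w h4
    rw [show w * (m₀⁻¹ * w) * w⁻¹ = w * m₀⁻¹ by group,
      show w * ((z⁻¹ * w)⁻¹ * w) * w⁻¹ = z by group] at h5
    exact h5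

end NCW

/-- The noncrossing partition poset `NC(S_n, w) = [1, w]`, `w = (1 2 ... n)`, is a lattice:
every pair of elements has a least upper bound and a greatest lower bound. -/
theorem noncrossingPartition_lattice (n : ℕ) (u v : Perm (Fin n))
    (hu : absLe u (finRotate n)) (hv : absLe v (finRotate n)) :
    (∃ m : Perm (Fin n), absLe m (finRotate n) ∧ absLe u m ∧ absLe v m ∧
      ∀ z : Perm (Fin n), absLe z (finRotate n) → absLe u z → absLe v z → absLe m z) ∧
    (∃ m : Perm (Fin n), absLe m (finRotate n) ∧ absLe m u ∧ absLe m v ∧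
      ∀ z : Perm (Fin n), absLe z (finRotate n) → absLe z u → absLe z v → absLe z m) := by
  match n, u, v, hu, hv with
  | 0, u, v, hu, hv =>
    have hall : ∀ σ : Perm (Fin 0), σ = 1 := fun σ => Equiv.ext (fun x => x.elim0)
    have habs : ∀ σ τ : Perm (Fin 0), absLe σ τ := by
      intro σ τ
      rw [hall σ, hall τ]
      exact NCW.absLe_refl 1
    exact ⟨⟨1, habs _ _, habs _ _, habs _ _, fun z _ _ _ => habs _ _⟩,
      ⟨1, habs _ _, habs _ _, habs _ _, fun z _ _ _ => habs _ _⟩⟩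
  | (N+1), u, v, hu, hv =>
    exact ⟨NCW.join_exists u v hu hv, NCW.meet_exists u v hu hv⟩
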